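/- Every nonempty matching stack B ⊆ P starts with card d, where d := ($ ++ #x₀, $ ++ # ++ y₀#), e := (#::[$], [$]), P := {d,e} ∪ { #x / y# | x/y ∈ x₀/y₀::R, (x,y) ≠ (ε,ε) }, with $, # fresh for the alphabet Σ covering x₀/y₀ and R. -/

import Mathlib

abbrev Card := List ℕ × List ℕ

def tau1 : List Card → List ℕ
  | [] => []
  | c :: A => c.1 ++ tau1 A

def tau2 : List Card → List ℕ
  | [] => []
  | c :: A => c.2 ++ tau2 A

inductive Rew (R : List Card) : List ℕ → List ℕ → Prop
  | step (u v l r : List ℕ) : (l, r) ∈ R → Rew R (u ++ l ++ v) (u ++ r ++ v)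

def Rewt (R : List Card) : List ℕ → List ℕ → Prop :=
  Relation.ReflTransGen (Rew R)

def hashL (h : ℕ) : List ℕ → List ℕ
  | [] => []
  | a :: x => h :: a :: hashL h x

def hashR (h : ℕ) : List ℕ → List ℕ
  | [] => []
  | a :: x => a :: h :: hashR h x

lemma head1 (x₀ y₀ : List ℕ) (R : List Card) (dol hsh : ℕ)
    (d e : Card) (P : List Card)
    (hdd : d = (dol :: hashL hsh x₀, dol :: hsh :: hashR hsh y₀))
    (hee : e = ([hsh, dol], [dol]))
    (hP : P = [d, e] ++
      ((((x₀, y₀) :: R).filter (fun c => c ≠ (([] : List ℕ), ([] : List ℕ)))).map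
        (fun c => (hashL hsh c.1, hashR hsh c.2)))) :
    ∀ B : List Card, B ⊆ P → ∀ a l, tau1 B = a :: l → a = dol ∨ a = hsh := by
  intro B
  induction B with
  | nil => intro _ a l h; simp [tau1] at h
  | cons c B ih =>
    intro hB a l h
    have hc : c ∈ P := hB (List.mem_cons_self)
    have hB' : B ⊆ P := fun x hx => hB (List.mem_cons_of_mem _ hx)
    rw [hP] at hc
    simp only [List.cons_append, List.nil_append, List.mem_cons, List.mem_map,
      List.mem_filter] at hc
    rcases hc with rfl | rfl | ⟨⟨x, y⟩, hmem, rfl⟩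
    · rw [hdd] at h; simp [tau1] at h; left; exact h.1.symm
    · rw [hee] at h; simp [tau1] at h; right; exact h.1.symm
    · cases x with
      | nil => simp [tau1, hashL] at h; exact ih hB' a l h
      | cons b x' =>
        simp [tau1, hashL] at h
        right; exact h.1.symm

lemma head2 (x₀ y₀ : List ℕ) (R : List Card) (Sig : List ℕ) (dol hsh : ℕ)
    (hR : ∀ c ∈ ((x₀, y₀) :: R), c.1 ⊆ Sig ∧ c.2 ⊆ Sig)
    (d e : Card) (P : List Card)
    (hdd : d = (dol :: hashL hsh x₀, dol :: hsh :: hashR hsh y₀))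
    (hee : e = ([hsh, dol], [dol]))
    (hP : P = [d, e] ++
      ((((x₀, y₀) :: R).filter (fun c => c ≠ (([] : List ℕ), ([] : List ℕ)))).map
        (fun c => (hashL hsh c.1, hashR hsh c.2)))) :
    ∀ B : List Card, B ⊆ P → ∀ a l, tau2 B = a :: l → a = dol ∨ a ∈ Sig := by
  intro B
  induction B with
  | nil => intro _ a l h; simp [tau2] at h
  | cons c B ih =>
    intro hB a l h
    have hc : c ∈ P := hB (List.mem_cons_self)
    have hB' : B ⊆ P := fun x hx => hB (List.mem_cons_of_mem _ hx)
    rw [hP] at hc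
    simp only [List.cons_append, List.nil_append, List.mem_cons, List.mem_map,
      List.mem_filter] at hc
    rcases hc with rfl | rfl | ⟨⟨x, y⟩, hmem, rfl⟩
    · rw [hdd] at h; simp [tau2] at h; left; exact h.1.symm
    · rw [hee] at h; simp [tau2] at h; left; exact h.1.symm
    · cases y with
      | nil => simp [tau2, hashR] at h; exact ih hB' a l h
      | cons b y' =>
        simp [tau2, hashR] at h
        right
        rw [← h.1]
        exact (hR (x, b :: y') (List.mem_cons.mpr hmem.1)).2 (List.mem_cons_self)

theorem match_start (x₀ y₀ : List ℕ) (R : List Card) (Sig : List ℕ) (dol hsh : ℕ)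
    (hR : ∀ c ∈ ((x₀, y₀) :: R), c.1 ⊆ Sig ∧ c.2 ⊆ Sig)
    (hd : dol ∉ Sig) (hh : hsh ∉ Sig) (hne : dol ≠ hsh)
    (d e : Card) (P : List Card)
    (hdd : d = (dol :: hashL hsh x₀, dol :: hsh :: hashR hsh y₀))
    (hee : e = ([hsh, dol], [dol]))
    (hP : P = [d, e] ++
      ((((x₀, y₀) :: R).filter (fun c => c ≠ (([] : List ℕ), ([] : List ℕ)))).map
        (fun c => (hashL hsh c.1, hashR hsh c.2))))
    (B : List Card) (hB : B ⊆ P) (hBne : B ≠ []) (hmatch : tau1 B = tau2 B) :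
    ∃ B', B = d :: B' := by
  cases B with
  | nil => exact absurd rfl hBne
  | cons c B' =>
    have hc : c ∈ P := hB (List.mem_cons_self)
    have hB' : B' ⊆ P := fun x hx => hB (List.mem_cons_of_mem _ hx)
    rw [hP] at hc
    simp only [List.cons_append, List.nil_append, List.mem_cons, List.mem_map,
      List.mem_filter] at hc
    rcases hc with rfl | rfl | ⟨⟨x, y⟩, hmem, rfl⟩
    · exact ⟨B', rfl⟩
    · rw [hee] at hmatch
      simp [tau1, tau2] at hmatch
      exact absurd hmatch.1.symm hne
    · exfalso
      cases x with
      | nil =>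
        -- y nonempty
        cases y with
        | nil => simp at hmem
        | cons b y' =>
          simp [tau1, tau2, hashL, hashR] at hmatch
          -- hmatch : tau1 B' = b :: hsh :: hashR hsh y' ++ tau2 B'
          rcases head1 x₀ y₀ R dol hsh d e P hdd hee hP B' hB' b _ hmatch with h | h
          · exact hd (h ▸ (hR (([] : List ℕ), b :: y') (List.mem_cons.mpr hmem.1)).2 (List.mem_cons_self))
          · exact hh (h ▸ (hR (([] : List ℕ), b :: y') (List.mem_cons.mpr hmem.1)).2 (List.mem_cons_self))
      | cons a x' =>
        cases y with
        | nil =>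
          simp [tau1, tau2, hashL, hashR] at hmatch
          rcases head2 x₀ y₀ R Sig dol hsh hR d e P hdd hee hP B' hB' hsh _ hmatch.symm with h | h
          · exact hne h.symm
          · exact hh h
        | cons b y' =>
          simp [tau1, tau2, hashL, hashR] at hmatch
          have hy : b ∈ Sig := (hR (a :: x', b :: y') (List.mem_cons.mpr hmem.1)).2 (List.mem_cons_self)
          exact hh (hmatch.1 ▸ hy)
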